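/- Define μ(h) = 1 + (h/2^h)·binom(h, h/2) for h a positive multiple of 4. Then for all such h, sqrt(2h/π) + 0.9 < μ(h) < sqrt(2h/π) + 1. -/

import Mathlib

open Real

lemma wallis_choose (n : ℕ) :
    Real.Wallis.W n * (2*n+1) * ((Nat.choose (2*n) n : ℝ))^2 = (4:ℝ)^(2*n) := by
  rw [Real.Wallis.W_eq_factorial_ratio]
  have hfac : ((2*n).factorial : ℝ) = (Nat.choose (2*n) n : ℝ) * n.factorial * n.factorial := by
    have := Nat.choose_mul_factorial_mul_factorial (Nat.le_mul_of_pos_left n (by norm_num : 0 < 2))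
    rw [show 2*n - n = n by omega] at this
    exact_mod_cast this.symm
  have h1 : ((n.factorial : ℝ)) ≠ 0 := by positivity
  have h2 : (2*(n:ℝ)+1) ≠ 0 := by positivity
  have h3 : ((Nat.choose (2*n) n : ℝ)) ≠ 0 := by
    have := Nat.choose_pos (Nat.le_mul_of_pos_left n (by norm_num : 0 < 2))
    positivity
  have h4 : (4:ℝ)^(2*n) = 2^(4*n) := by
    rw [show (4:ℝ) = 2^2 by norm_num, ← pow_mul]; ring_nf
  rw [hfac, h4]
  field_simp

lemma wallis_b (n : ℕ) :
    Real.Wallis.W n * (2*n+1) * ((Nat.choose (2*n) n : ℝ)/4^n)^2 = 1 := by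
  have h4 : ((4:ℝ)^n)^2 ≠ 0 := by positivity
  rw [div_pow, ← mul_div_assoc, div_eq_one_iff_eq h4, ← pow_mul, mul_comm n 2]
  exact wallis_choose n

lemma binom_sq_lower (n : ℕ) :
    2 ≤ Real.pi * ((Nat.choose (2*n) n : ℝ)/4^n)^2 * (2*n+1) := by
  have hW := Real.Wallis.W_le n
  have hb := wallis_b n
  have hsq : (0:ℝ) ≤ ((Nat.choose (2*n) n : ℝ)/4^n)^2 := sq_nonneg _
  have h2n : (0:ℝ) < 2*(n:ℝ)+1 := by positivity
  nlinarith [mul_le_mul_of_nonneg_right hW (mul_nonneg (le_of_lt h2n) hsq)]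

lemma binom_sq_upper (n : ℕ) :
    Real.pi * ((Nat.choose (2*n) n : ℝ)/4^n)^2 * (2*n+1)^2 ≤ 2*(2*n+2) := by
  have hW := Real.Wallis.le_W n
  have hb := wallis_b n
  have hsq : (0:ℝ) ≤ ((Nat.choose (2*n) n : ℝ)/4^n)^2 := sq_nonneg _
  have h2n : (0:ℝ) < 2*(n:ℝ)+1 := by positivity
  have h2n2 : (0:ℝ) < 2*(n:ℝ)+2 := by positivity
  have hW' : (2*(n:ℝ)+1)*(Real.pi/2) ≤ Real.Wallis.W n * (2*n+2) := by
    rw [div_mul_eq_mul_div, div_le_iff₀ h2n2] at hW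
    linarith
  nlinarith [mul_le_mul_of_nonneg_right hW' (mul_nonneg (le_of_lt h2n) hsq)]

set_option maxHeartbeats 1000000 in
theorem stmt_5 (h : ℕ) (hh : 0 < h) (hdvd : 4 ∣ h)
    (μ : ℝ) (hμ : μ = 1 + ((h : ℝ) / 2 ^ h) * (Nat.choose h (h / 2) : ℝ)) :
    Real.sqrt (2 * h / Real.pi) + 0.9 < μ ∧ μ < Real.sqrt (2 * h / Real.pi) + 1 := by
  obtain ⟨k, hk⟩ := hdvd
  have hk1 : 1 ≤ k := by omega
  have hπ : 3.1415 < π := by have := Real.pi_gt_d6; linarith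
  have hπ' : π < 3.15 := Real.pi_lt_d2
  set n : ℕ := 2*k with hn
  have hhn : h = 2*n := by omega
  have hdiv : h/2 = n := by omega
  have hcast : (h:ℝ) = 2*n := by rw [hhn]; push_cast; ring
  have hpow : (2:ℝ)^h = 4^n := by rw [hhn, pow_mul]; norm_num
  set b : ℝ := (Nat.choose (2*n) n : ℝ)/4^n with hbdef
  have hμ' : μ = 1 + 2*n*b := by
    rw [hμ, hdiv, hcast, hpow, hbdef, hhn]; ring
  have hbpos : 0 < b := by
    have := Nat.choose_pos (Nat.le_mul_of_pos_left n (by norm_num : 0 < 2))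
    rw [hbdef]; positivity
  have harg : 2*(h:ℝ)/π = 4*n/π := by rw [hcast]; ring_nf
  have low := binom_sq_lower n
  have up := binom_sq_upper n
  have hnpos : (0:ℝ) < n := by positivity
  constructor
  · -- lower bound
    rw [hμ', harg]
    have key : Real.sqrt (4*n/π) < 2*n*b + 0.1 := by
      rw [Real.sqrt_lt' (by positivity), div_lt_iff₀ pi_pos]
      by_cases hk4 : 4 ≤ k
      · -- n ≥ 8
        have hn8 : (8:ℝ) ≤ n := by
          have : (8:ℕ) ≤ n := by omega
          exact_mod_cast this
        have hx : 10 < π*b*(2*n+1) := by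
          nlinarith [sq_nonneg (π*b*(2*(n:ℝ)+1)), mul_pos (mul_pos pi_pos hbpos) (show (0:ℝ) < 2*n+1 by positivity)]
        nlinarith [mul_pos hnpos hnpos, mul_pos hnpos hbpos]
      · -- k = 1, 2, 3
        have hk3 : k ≤ 3 := by omega
        interval_cases k
        · norm_num [show Nat.choose 4 2 = 6 from rfl, hn] at hbdef ⊢
          rw [hbdef]; nlinarith [hπ]
        · norm_num [show Nat.choose 8 4 = 70 from rfl, hn] at hbdef ⊢
          rw [hbdef]; nlinarith [hπ]
        · norm_num [show Nat.choose 12 6 = 924 from rfl, hn] at hbdef ⊢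
          rw [hbdef]; nlinarith [hπ]
    linarith
  · -- upper bound
    rw [hμ', harg]
    have h0 : (0:ℝ) ≤ 2*n*b := by positivity
    have key : 2*n*b < Real.sqrt (4*n/π) := by
      rw [Real.lt_sqrt h0, lt_div_iff₀ pi_pos]
      have h2n1 : (0:ℝ) < (2*(n:ℝ)+1)^2 := by positivity
      have step : (2*(n:ℝ)*b)^2 * π * (2*n+1)^2 < 4*n*(2*n+1)^2 := by
        nlinarith [mul_le_mul_of_nonneg_left up (show (0:ℝ) ≤ 4*(n:ℝ)^2 by positivity), hnpos]
      nlinarith [step, h2n1]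
    linarith
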